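/- (A martingale difference violating Wu's condition, d = 1.) Let (ε_i)_{i∈Z} be i.i.d. with P(ε_0 = 1) = P(ε_0 = −1) = 1/2 on (Ω,F,P) = ({−1,1}^Z, product σ-algebra, product measure), and let F_k = σ(ε_j : j ≤ k). For measurable f : {−1,1}^Z → R and i ∈ Z define the physical dependence measure δ_i(f) = ‖f(ε) − f(ε^{*i})‖₂, where ε^{*i} agrees with ε in every coordinate except coordinate i, which is replaced by an independent copy ε_i^* of ε_i. Then there exists f ∈ L²(P) which is F_0-measurable and satisfies E(f | F_{−1}) = 0 a.s. (so that {f∘T_k}_{k∈Z}, T the shift, is a stationary martingale difference sequence), but Σ_{i∈Z} δ_i(f) = ∞. -/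

import Mathlib

open MeasureTheory ProbabilityTheory Filter
open scoped ENNReal NNReal

noncomputable section

/-- The σ-algebra `F_k = σ(ε_j : j ≤ k)` on `{−1,1}^ℤ ⊆ ℝ^ℤ`. -/
def radF (k : ℤ) : MeasurableSpace (ℤ → ℝ) :=
  ⨆ j : ℤ, ⨆ _ : j ≤ k, MeasurableSpace.comap (fun ω => ω j) inferInstance

/-- The coordinates of `P` are i.i.d. Rademacher: `P(ε_i = 1) = P(ε_i = −1) = 1/2`. -/
def IsRademacherMeasure (P : Measure (ℤ → ℝ)) : Prop :=
  IsProbabilityMeasure P ∧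
    iIndepFun (m := fun _ : ℤ => (inferInstance : MeasurableSpace ℝ)) (fun i ω => ω i) P ∧
    ∀ i : ℤ, P.map (fun ω => ω i)
      = (2⁻¹ : ℝ≥0∞) • Measure.dirac (1 : ℝ) + (2⁻¹ : ℝ≥0∞) • Measure.dirac (-1 : ℝ)

/-- The physical dependence measure `δ_i(f) = ‖f(ε) − f(ε^{*i})‖₂`, computed on the enlarged
space `Ω × Ω` carrying `(ε, ε^*)` with law `P ⊗ P`; `ε^{*i}` is `ε` with coordinate `i`
replaced by `ε_i^*`. -/
def physDelta (P : Measure (ℤ → ℝ)) (i : ℤ) (f : (ℤ → ℝ) → ℝ) : ℝ≥0∞ :=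
  eLpNorm (fun p : (ℤ → ℝ) × (ℤ → ℝ) => f p.1 - f (Function.update p.1 i (p.2 i))) 2
    (P.prod P)

end

namespace S17

noncomputable section

def co (j : ℕ) : ℤ := -(j : ℤ) - 1

lemma co_injective : Function.Injective co := by
  intro a b h
  simp only [co] at h
  omega

lemma co_le (j : ℕ) : co j ≤ -1 := by simp only [co]; omega

lemma co_ne_zero (j : ℕ) : co j ≠ 0 := by simp only [co]; omega

open Classical in
def N (ω : ℤ → ℝ) : ℕ := if h : ∃ j : ℕ, ω (co j) = -1 then Nat.find h + 1 else 0

lemma N_eq_succ_iff {ω : ℤ → ℝ} {k : ℕ} :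
    N ω = k + 1 ↔ ω (co k) = -1 ∧ ∀ j < k, ω (co j) ≠ -1 := by
  unfold N
  split_ifs with hex
  · rw [add_left_inj, Nat.find_eq_iff hex]
  · constructor
    · intro h0; exact absurd h0 (by simp)
    · rintro ⟨h1, -⟩; exact absurd ⟨k, h1⟩ hex

lemma N_eq_zero_iff {ω : ℤ → ℝ} : N ω = 0 ↔ ∀ j : ℕ, ω (co j) ≠ -1 := by
  unfold N
  split_ifs with hex
  · refine iff_of_false (by simp) ?_
    obtain ⟨j, hj⟩ := hex
    exact fun hall => hall j hj
  · exact iff_of_true rfl (fun j hj => hex ⟨j, hj⟩)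

def phi (n : ℕ) : ℝ := if n % 2 = 0 ∧ n ≠ 0 then 2 ^ (n / 2) / n else 0

lemma phi_zero : phi 0 = 0 := by simp [phi]

lemma phi_odd {n : ℕ} (h : n % 2 = 1) : phi n = 0 := by simp [phi, h]

lemma phi_even (m : ℕ) : phi (2 * m + 2) = 2 ^ (m + 1) / (2 * m + 2 : ℕ) := by
  have h1 : (2 * m + 2) % 2 = 0 := by omega
  have h2 : (2 * m + 2) / 2 = m + 1 := by omega
  simp [phi, h1, h2]

lemma phi_nonneg (n : ℕ) : 0 ≤ phi n := by
  unfold phi; split_ifs with h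
  · positivity
  · exact le_refl 0

def hfun (ω : ℤ → ℝ) : ℝ := phi (N ω)

def f (ω : ℤ → ℝ) : ℝ := hfun ω * ω 0

section Meas

variable {P : Measure (ℤ → ℝ)} (hP : IsRademacherMeasure P)
include hP

lemma coord_apply (j : ℤ) {s : Set ℝ} (hs : MeasurableSet s) :
    P ((fun ω => ω j) ⁻¹' s)
      = 2⁻¹ * s.indicator (fun _ => (1 : ℝ≥0∞)) 1 + 2⁻¹ * s.indicator (fun _ => (1 : ℝ≥0∞)) (-1) := by
  rw [← Measure.map_apply (measurable_pi_apply j) hs, hP.2.2 j]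
  simp only [Measure.coe_add, Measure.coe_smul, Pi.add_apply, Pi.smul_apply,
    Measure.dirac_apply' _ hs, smul_eq_mul]
  rfl

lemma coord_neg_one (j : ℤ) : P ((fun ω => ω j) ⁻¹' {-1}) = 2⁻¹ := by
  rw [coord_apply hP j (measurableSet_singleton _)]
  rw [Set.indicator_of_notMem (by norm_num), Set.indicator_of_mem (by norm_num)]
  simp

lemma coord_ne_neg_one (j : ℤ) : P ((fun ω => ω j) ⁻¹' ({-1}ᶜ)) = 2⁻¹ := by
  rw [coord_apply hP j (measurableSet_singleton _).compl]
  rw [Set.indicator_of_mem (by norm_num), Set.indicator_of_notMem (by norm_num)]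
  simp

lemma coord_pm (j : ℤ) : P ((fun ω => ω j) ⁻¹' ({1, -1}ᶜ : Set ℝ)) = 0 := by
  rw [coord_apply hP j (by measurability)]
  rw [Set.indicator_of_notMem (by norm_num), Set.indicator_of_notMem (by norm_num)]
  simp

lemma meas_cylinder (S : Finset ℤ) (sets : ℤ → Set ℝ)
    (hmeas : ∀ i ∈ S, MeasurableSet (sets i))
    (hhalf : ∀ i ∈ S, P ((fun ω : ℤ → ℝ => ω i) ⁻¹' sets i) = 2⁻¹) :
    P (⋂ i ∈ S, (fun ω : ℤ → ℝ => ω i) ⁻¹' sets i) = 2⁻¹ ^ S.card := by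
  rw [hP.2.1.measure_inter_preimage_eq_mul S hmeas, Finset.prod_congr rfl hhalf,
    Finset.prod_const]

def fibSet (k : ℕ) : Set (ℤ → ℝ) := {ω | N ω = k + 1}

omit hP in
lemma fibSet_eq (k : ℕ) : fibSet k =
    ⋂ i ∈ (Finset.range (k + 1)).image co,
      (fun ω : ℤ → ℝ => ω i) ⁻¹' (if i = co k then {-1} else {-1}ᶜ) := by
  ext ω
  simp only [fibSet, Set.mem_setOf_eq, N_eq_succ_iff, Set.mem_iInter, Set.mem_preimage,
    Finset.mem_image, Finset.mem_range]
  constructor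
  · rintro ⟨h1, h2⟩ i ⟨j, hj, rfl⟩
    by_cases hjk : j = k
    · subst hjk; simp [h1]
    · rw [if_neg (fun hc => hjk (co_injective hc))]
      exact h2 j (by omega)
  · intro hall
    have hk := hall (co k) ⟨k, by omega, rfl⟩
    rw [if_pos rfl] at hk
    refine ⟨hk, fun j hj => ?_⟩
    have hj' := hall (co j) ⟨j, by omega, rfl⟩
    rwa [if_neg (fun hc => (by omega : j ≠ k) (co_injective hc))] at hj'

lemma meas_fibSet (k : ℕ) : P (fibSet k) = 2⁻¹ ^ (k + 1) := by
  rw [fibSet_eq, meas_cylinder hP _ _ ?_ ?_,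
    Finset.card_image_of_injective _ co_injective, Finset.card_range]
  · intro i _
    split_ifs
    exacts [measurableSet_singleton _, (measurableSet_singleton _).compl]
  · intro i _
    split_ifs
    exacts [coord_neg_one hP _, coord_ne_neg_one hP _]

omit hP in
lemma radF_le (k : ℤ) : radF k ≤ (inferInstance : MeasurableSpace (ℤ → ℝ)) :=
  iSup₂_le fun j _ => (measurable_pi_apply j).comap_le

omit hP in
lemma measurable_coord_radF {k j : ℤ} (hj : j ≤ k) :
    Measurable[radF k] fun ω : ℤ → ℝ => ω j :=
  Measurable.of_comap_le (le_iSup₂_of_le j hj le_rfl)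

omit hP in
lemma radF_mono : radF (-1) ≤ radF 0 :=
  iSup₂_le fun j hj => le_iSup₂_of_le j (by omega) le_rfl

omit hP in
lemma measurable_N : Measurable[radF (-1)] N := by
  refine @measurable_to_countable' ℕ (ℤ → ℝ) _ _ (radF (-1)) N fun n => ?_
  match n with
  | 0 =>
    have h0 : N ⁻¹' {0} = ⋂ j : ℕ, (fun ω : ℤ → ℝ => ω (co j)) ⁻¹' {-1}ᶜ := by
      ext ω; simp [N_eq_zero_iff]
    rw [h0]
    exact MeasurableSet.iInter fun j =>
      (measurable_coord_radF (co_le j)) (measurableSet_singleton _).compl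
  | k + 1 =>
    have h0 : N ⁻¹' {k + 1} = fibSet k := rfl
    rw [h0, fibSet_eq]
    refine Set.Finite.measurableSet_biInter (Finset.finite_toSet _) fun i hi => ?_
    obtain ⟨j, -, rfl⟩ := Finset.mem_image.mp hi
    have hmc : Measurable[radF (-1)] fun ω : ℤ → ℝ => ω (co j) :=
      measurable_coord_radF (co_le j)
    split_ifs
    exacts [hmc (measurableSet_singleton _), hmc (measurableSet_singleton _).compl]

omit hP in
lemma measurable_hfun_radF : Measurable[radF (-1)] hfun :=
  (measurable_from_top (f := phi)).comp measurable_N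

omit hP in
lemma measurable_hfun : Measurable hfun :=
  measurable_hfun_radF.mono (radF_le _) le_rfl

omit hP in
lemma measurable_f_radF : Measurable[radF 0] f :=
  ((measurable_hfun_radF).mono radF_mono le_rfl).mul (measurable_coord_radF le_rfl)

omit hP in
lemma measurable_f : Measurable f :=
  measurable_f_radF.mono (radF_le _) le_rfl

lemma ae_pm : ∀ᵐ ω ∂P, ω 0 = 1 ∨ ω 0 = -1 := by
  rw [ae_iff]
  have hset : {ω : ℤ → ℝ | ¬(ω 0 = 1 ∨ ω 0 = -1)} = (fun ω : ℤ → ℝ => ω 0) ⁻¹' ({1, -1}ᶜ) := by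
    ext ω; simp [not_or]
  rw [hset]
  exact coord_pm hP 0

omit hP in
lemma phi_sq_bound (n : ℕ) : phi n ^ 2 * (2⁻¹ : ℝ) ^ n ≤ (1 / (n : ℝ)) ^ 2 := by
  unfold phi
  split_ifs with hc
  · obtain ⟨he, hn⟩ := hc
    have h2 : n / 2 * 2 = n := Nat.div_mul_cancel (Nat.dvd_of_mod_eq_zero he)
    have hsq : ((2 : ℝ) ^ (n / 2)) ^ 2 = 2 ^ n := by rw [← pow_mul, h2]
    have hnpos : (0 : ℝ) < n := Nat.cast_pos.mpr (Nat.pos_of_ne_zero hn)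
    have h2n : (0 : ℝ) < 2 ^ n := by positivity
    rw [div_pow, hsq, inv_pow]
    rw [div_pow, one_pow]
    rw [div_mul_eq_mul_div, mul_inv_cancel₀ (ne_of_gt h2n)]
  · have hnn : (0:ℝ) ≤ (1 / (n : ℝ)) ^ 2 := by positivity
    simpa using hnn

lemma lintegral_hfun_sq : ∫⁻ ω, (‖hfun ω‖₊ : ℝ≥0∞) ^ (2 : ℝ) ∂P < ⊤ := by
  have hNmeas : Measurable N := measurable_N.mono (radF_le _) le_rfl
  set g : ℕ → ℝ≥0∞ := fun n => (‖phi n‖₊ : ℝ≥0∞) ^ (2 : ℝ) with hg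
  have hmap : ∫⁻ ω, g (N ω) ∂P = ∑' n : ℕ, g n * P (N ⁻¹' {n}) := by
    rw [← lintegral_map (measurable_from_top (f := g)) hNmeas, lintegral_countable']
    congr 1
    ext n
    rw [Measure.map_apply hNmeas (measurableSet_singleton n)]
  have hbound : ∀ n : ℕ, g n * P (N ⁻¹' {n}) ≤ ENNReal.ofReal ((1 / (n : ℝ)) ^ 2) := by
    intro n
    match n with
    | 0 =>
      have : g 0 = 0 := by
        simp [hg, phi_zero, ENNReal.zero_rpow_of_pos (by norm_num : (0:ℝ) < 2)]
      simp [this]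
    | k + 1 =>
      have hPk : P (N ⁻¹' {k + 1}) = 2⁻¹ ^ (k + 1) := meas_fibSet hP k
      have hgk : g (k + 1) = ENNReal.ofReal (phi (k + 1) ^ 2) := by
        show ((‖phi (k+1)‖₊ : ℝ≥0∞)) ^ (2:ℝ) = ENNReal.ofReal (phi (k + 1) ^ 2)
        rw [← enorm_eq_nnnorm, ← ofReal_norm, ENNReal.ofReal_rpow_of_nonneg (norm_nonneg _)
          (by norm_num : (0:ℝ) ≤ 2)]
        congr 1
        rw [show (2:ℝ) = ((2:ℕ):ℝ) by norm_num, Real.rpow_natCast]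
        rw [Real.norm_eq_abs, sq_abs]
      have h2 : (2⁻¹ : ℝ≥0∞) ^ (k + 1) = ENNReal.ofReal ((2⁻¹ : ℝ) ^ (k + 1)) := by
        rw [ENNReal.ofReal_pow (by norm_num)]
        congr 1
        rw [ENNReal.ofReal_inv_of_pos (by norm_num)]
        norm_num
      rw [hPk, hgk, h2, ← ENNReal.ofReal_mul (by positivity)]
      exact ENNReal.ofReal_le_ofReal (phi_sq_bound (k + 1))
  have hsum : Summable (fun n : ℕ => (1 / (n : ℝ)) ^ 2) := by
    have := Real.summable_one_div_nat_pow.mpr (by norm_num : 1 < 2)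
    exact this.congr fun n => by rw [div_pow, one_pow]
  calc ∫⁻ ω, (‖hfun ω‖₊ : ℝ≥0∞) ^ (2 : ℝ) ∂P = ∫⁻ ω, g (N ω) ∂P := rfl
    _ = ∑' n : ℕ, g n * P (N ⁻¹' {n}) := hmap
    _ ≤ ∑' n : ℕ, ENNReal.ofReal ((1 / (n : ℝ)) ^ 2) := ENNReal.tsum_le_tsum hbound
    _ = ENNReal.ofReal (∑' n : ℕ, (1 / (n : ℝ)) ^ 2) :=
        (ENNReal.ofReal_tsum_of_nonneg (fun n => by positivity) hsum).symm
    _ < ⊤ := ENNReal.ofReal_lt_top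

lemma memL2_hfun : MemLp hfun 2 P := by
  refine ⟨measurable_hfun.aestronglyMeasurable, ?_⟩
  rw [eLpNorm_eq_lintegral_rpow_enorm_toReal (by norm_num) (by norm_num)]
  refine ENNReal.rpow_lt_top_of_nonneg (by norm_num) ?_
  simpa [enorm_eq_nnnorm] using (lintegral_hfun_sq hP).ne

lemma memL2_f : MemLp f 2 P := by
  refine (memL2_hfun hP).of_le measurable_f.aestronglyMeasurable ?_
  filter_upwards [ae_pm hP] with ω hω
  rcases hω with h | h <;>
    simp [f, Real.norm_eq_abs, abs_mul, h]

lemma integrable_coord : Integrable (fun ω : ℤ → ℝ => ω 0) P := by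
  haveI : IsProbabilityMeasure P := hP.1
  refine Integrable.mono' (integrable_const (1 : ℝ))
    (measurable_pi_apply 0).aestronglyMeasurable ?_
  filter_upwards [ae_pm hP] with ω hω
  rcases hω with h | h <;> rw [Real.norm_eq_abs, h] <;> norm_num

lemma integral_coord : ∫ ω, ω 0 ∂P = 0 := by
  have hmapint := integral_map (μ := P) (φ := fun ω : ℤ → ℝ => ω 0)
    (measurable_pi_apply 0).aemeasurable (f := id) aestronglyMeasurable_id
  simp only [id_eq] at hmapint
  rw [← hmapint, hP.2.2 0]
  have h1 : Integrable (fun y : ℝ => y) ((2⁻¹ : ℝ≥0∞) • Measure.dirac (1 : ℝ)) := by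
    refine Integrable.smul_measure ?_ (by norm_num)
    refine (integrable_const (1 : ℝ)).congr ?_
    rw [Filter.EventuallyEq, ae_dirac_iff (by measurability)]
  have h2 : Integrable (fun y : ℝ => y) ((2⁻¹ : ℝ≥0∞) • Measure.dirac (-1 : ℝ)) := by
    refine Integrable.smul_measure ?_ (by norm_num)
    refine (integrable_const (-1 : ℝ)).congr ?_
    rw [Filter.EventuallyEq, ae_dirac_iff (by measurability)]
  rw [integral_add_measure h1 h2, integral_smul_measure, integral_smul_measure,
    integral_dirac, integral_dirac]
  norm_num

lemma indep_big : Indep (radF (-1))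
    (MeasurableSpace.comap (fun ω : ℤ → ℝ => ω 0) inferInstance) P := by
  haveI : IsProbabilityMeasure P := hP.1
  have h0 := indep_iSup_of_disjoint
    (m := fun i : ℤ => MeasurableSpace.comap (fun ω : ℤ → ℝ => ω i) inferInstance)
    (fun i => (measurable_pi_apply i).comap_le) hP.2.1.iIndep
    (S := {j : ℤ | j ≤ -1}) (T := {0})
    (Set.disjoint_left.mpr fun j hj hj0 => by
      simp only [Set.mem_setOf_eq, Set.mem_singleton_iff] at hj hj0; omega)
  have hS : (⨆ j ∈ {j : ℤ | j ≤ -1},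
      MeasurableSpace.comap (fun ω : ℤ → ℝ => ω j) inferInstance) = radF (-1) := rfl
  have hT : (⨆ j ∈ ({0} : Set ℤ),
      MeasurableSpace.comap (fun ω : ℤ → ℝ => ω j) inferInstance)
      = MeasurableSpace.comap (fun ω : ℤ → ℝ => ω 0) inferInstance := iSup_singleton
  rwa [hS, hT] at h0

lemma setIntegral_f_zero {s : Set (ℤ → ℝ)} (hs : MeasurableSet[radF (-1)] s) :
    ∫ x in s, f x ∂P = 0 := by
  haveI : IsProbabilityMeasure P := hP.1
  set X : (ℤ → ℝ) → ℝ := s.indicator hfun with hX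
  have hXmeas : Measurable[radF (-1)] X := measurable_hfun_radF.indicator hs
  have hXmeas' : Measurable X := hXmeas.mono (radF_le _) le_rfl
  have hXY : IndepFun X (fun ω : ℤ → ℝ => ω 0) P := by
    rw [indepFun_iff_measure_inter_preimage_eq_mul]
    intro s' t' hs' ht'
    exact (Indep_iff _ _ _).mp (indep_big hP) _ _ (hXmeas hs') ⟨t', ht', rfl⟩
  have hXint : Integrable X P :=
    ((memL2_hfun hP).integrable (by norm_num)).indicator (radF_le _ _ hs)
  have heq : ∫ x in s, f x ∂P = ∫ x, X x * x 0 ∂P := by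
    rw [← integral_indicator (radF_le _ _ hs)]
    congr 1
    ext x
    rw [hX]
    exact Set.indicator_mul_left (i := x) s hfun (fun x : ℤ → ℝ => x 0)
  rw [heq]
  have hmul := hXY.integral_mul_eq_mul_integral hXint.aestronglyMeasurable (integrable_coord hP).aestronglyMeasurable
  rw [show (fun x : ℤ → ℝ => X x * x 0) = X * (fun ω : ℤ → ℝ => ω 0) from rfl, hmul,
    integral_coord hP, mul_zero]

lemma condexp_f : P[f | radF (-1)] =ᵐ[P] 0 := by
  haveI : IsProbabilityMeasure P := hP.1
  have hm : radF (-1) ≤ (inferInstance : MeasurableSpace (ℤ → ℝ)) := radF_le _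
  haveI : SigmaFinite (P.trim hm) := by infer_instance
  refine (ae_eq_condExp_of_forall_setIntegral_eq hm
    ((memL2_f hP).integrable (by norm_num))
    (fun s _ _ => (integrable_zero _ _ _).integrableOn)
    (fun s hs _ => ?_) ?_).symm
  · rw [setIntegral_f_zero hP hs]
    simp
  · exact StronglyMeasurable.aestronglyMeasurable stronglyMeasurable_const

omit hP in
lemma ofReal_half_pow (n : ℕ) : (2⁻¹ : ℝ≥0∞) ^ n = ENNReal.ofReal ((2⁻¹ : ℝ) ^ n) := by
  rw [ENNReal.ofReal_pow (by norm_num)]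
  congr 1
  rw [ENNReal.ofReal_inv_of_pos (by norm_num)]
  norm_num

def Bset (m : ℕ) : Set (ℤ → ℝ) := {ω | N ω = 2 * m + 2 ∧ ω (co (2 * m + 2)) = -1}

def Cset (m : ℕ) : Set (ℤ → ℝ) := (fun ω : ℤ → ℝ => ω (co (2 * m + 1))) ⁻¹' {-1}ᶜ

omit hP in
lemma Bset_eq (m : ℕ) : Bset m =
    ⋂ i ∈ (Finset.range (2 * m + 3)).image co,
      (fun ω : ℤ → ℝ => ω i) ⁻¹'
        (if i = co (2 * m + 1) ∨ i = co (2 * m + 2) then {-1} else {-1}ᶜ) := by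
  ext ω
  have h22 : 2 * m + 2 = (2 * m + 1) + 1 := by omega
  simp only [Bset, Set.mem_setOf_eq, h22, N_eq_succ_iff, Set.mem_iInter, Set.mem_preimage,
    Finset.mem_image, Finset.mem_range]
  constructor
  · rintro ⟨⟨h1, h2⟩, h3⟩ i ⟨j, hj, rfl⟩
    rcases Nat.lt_or_ge j (2 * m + 1) with hlt | hge
    · rw [if_neg (by rintro (hc | hc) <;> exact absurd (co_injective hc) (by omega))]
      exact h2 j hlt
    · have hcase : j = 2 * m + 1 ∨ j = 2 * m + 2 := by omega
      rcases hcase with rfl | rfl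
      · rw [if_pos (Or.inl rfl)]; exact h1
      · rw [if_pos (Or.inr rfl)]; exact h3
  · intro hall
    refine ⟨⟨?_, fun j hj => ?_⟩, ?_⟩
    · have h := hall (co (2 * m + 1)) ⟨2 * m + 1, by omega, rfl⟩
      rwa [if_pos (Or.inl rfl)] at h
    · have h := hall (co j) ⟨j, by omega, rfl⟩
      rwa [if_neg (by rintro (hc | hc) <;> exact absurd (co_injective hc) (by omega))] at h
    · have h := hall (co (2 * m + 2)) ⟨2 * m + 2, by omega, rfl⟩
      rwa [if_pos (Or.inr rfl)] at h

lemma meas_Bset (m : ℕ) : P (Bset m) = 2⁻¹ ^ (2 * m + 3) := by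
  rw [Bset_eq, meas_cylinder hP _ _ ?_ ?_,
    Finset.card_image_of_injective _ co_injective, Finset.card_range]
  · intro i _
    split_ifs
    exacts [measurableSet_singleton _, (measurableSet_singleton _).compl]
  · intro i _
    split_ifs
    exacts [coord_neg_one hP _, coord_ne_neg_one hP _]

lemma meas_Cset (m : ℕ) : P (Cset m) = 2⁻¹ := coord_ne_neg_one hP _

omit hP in
lemma diff_on_event {m : ℕ} {p : (ℤ → ℝ) × (ℤ → ℝ)} (hp : p ∈ Bset m ×ˢ Cset m) :
    f p.1 - f (Function.update p.1 (co (2 * m + 1)) (p.2 (co (2 * m + 1))))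
      = phi (2 * m + 2) * p.1 0 := by
  obtain ⟨⟨hN, hB2⟩, hC⟩ := hp
  have hC' : p.2 (co (2 * m + 1)) ≠ -1 := hC
  set i := co (2 * m + 1) with hi
  set ω' := Function.update p.1 i (p.2 i) with hω'
  have hup0 : ω' 0 = p.1 0 :=
    Function.update_of_ne (Ne.symm (co_ne_zero _)) _ _
  have hNcond := N_eq_succ_iff.mp (show N p.1 = (2 * m + 1) + 1 by omega)
  have hN' : N ω' = (2 * m + 2) + 1 := by
    rw [N_eq_succ_iff]
    constructor
    · rw [hω', Function.update_of_ne
        (fun hc => (by omega : ¬(2 * m + 2 = 2 * m + 1)) (by exact_mod_cast co_injective hc))]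
      exact hB2
    · intro j hj
      by_cases hji : j = 2 * m + 1
      · subst hji
        rw [hω', hi, Function.update_self]
        exact hC'
      · rw [hω', Function.update_of_ne (fun hc => hji (co_injective hc))]
        exact hNcond.2 j (by omega)
  have hphi' : phi ((2 * m + 2) + 1) = 0 := phi_odd (by omega)
  show hfun p.1 * p.1 0 - hfun ω' * ω' 0 = phi (2 * m + 2) * p.1 0
  rw [hfun, hfun, hN, hN', hphi', hup0, zero_mul, sub_zero]

omit hP in
lemma numeric (m : ℕ) :
    (1 / (4 * ((m : ℝ) + 1))) ^ 2 = phi (2 * m + 2) ^ 2 * ((2⁻¹ : ℝ) ^ (2 * m + 4)) := by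
  rw [phi_even]
  have h4 : ((2 : ℝ)) ^ (2 * m + 4) = ((2 : ℝ) ^ (m + 1)) ^ 2 * 4 := by
    rw [← pow_mul, show (m + 1) * 2 = 2 * m + 2 by ring, show (4:ℝ) = 2^2 by norm_num,
      ← pow_add]
  have hcast : ((2 * m + 2 : ℕ) : ℝ) = 2 * (m : ℝ) + 2 := by push_cast; ring
  rw [hcast, inv_pow, h4]
  have hne1 : (2 : ℝ) * (m : ℝ) + 2 ≠ 0 := by positivity
  have hne2 : ((2 : ℝ) ^ (m + 1)) ≠ 0 := by positivity
  field_simp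
  ring

lemma delta_lower (m : ℕ) :
    ENNReal.ofReal (1 / (4 * ((m : ℝ) + 1))) ≤ physDelta P (co (2 * m + 1)) f := by
  haveI : IsProbabilityMeasure P := hP.1
  set i := co (2 * m + 1) with hi
  set D : (ℤ → ℝ) × (ℤ → ℝ) → ℝ :=
    fun p => f p.1 - f (Function.update p.1 i (p.2 i)) with hD
  set G : Set ((ℤ → ℝ) × (ℤ → ℝ)) := {p | p.1 0 = 1 ∨ p.1 0 = -1} with hG
  set E : Set ((ℤ → ℝ) × (ℤ → ℝ)) := (Bset m ×ˢ Cset m) ∩ G with hE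
  have hBmeas : MeasurableSet (Bset m) := by
    rw [Bset_eq]
    refine Set.Finite.measurableSet_biInter (Finset.finite_toSet _) fun j _ => ?_
    split_ifs
    exacts [(measurable_pi_apply _) (measurableSet_singleton _),
      (measurable_pi_apply _) (measurableSet_singleton _).compl]
  have hCmeas : MeasurableSet (Cset m) :=
    (measurable_pi_apply _) (measurableSet_singleton _).compl
  have hGmeas : MeasurableSet G := by
    have hset : G = (fun p : (ℤ → ℝ) × (ℤ → ℝ) => p.1 0) ⁻¹' {1, -1} := by
      ext p; simp [hG]
    rw [hset]
    exact ((measurable_pi_apply 0).comp measurable_fst) (by measurability)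
  have hEmeas : MeasurableSet E := (hBmeas.prod hCmeas).inter hGmeas
  have hGnull : (P.prod P) Gᶜ = 0 := by
    have hset : Gᶜ = ((fun ω : ℤ → ℝ => ω 0) ⁻¹' ({1, -1}ᶜ : Set ℝ)) ×ˢ (Set.univ : Set (ℤ → ℝ)) := by
      ext p
      simp [hG, not_or]
    rw [hset, Measure.prod_prod, coord_pm hP, zero_mul]
  have hEmeasure : (P.prod P) E = 2⁻¹ ^ (2 * m + 4) := by
    rw [hE, measure_inter_conull hGnull, Measure.prod_prod, meas_Bset hP, meas_Cset hP,
      show 2 * m + 4 = (2 * m + 3) + 1 by omega]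
    ring
  have hpoint : ∀ p ∈ E, ENNReal.ofReal (phi (2 * m + 2) ^ 2) = (‖D p‖₊ : ℝ≥0∞) ^ (2 : ℝ) := by
    intro p hp
    obtain ⟨hpBC, hpm⟩ := hp
    have hDval : D p = phi (2 * m + 2) * p.1 0 := diff_on_event hpBC
    have habs : ‖D p‖ = phi (2 * m + 2) := by
      rw [hDval, Real.norm_eq_abs, abs_mul]
      rcases hpm with h | h <;> rw [h] <;>
        simp [abs_of_nonneg (phi_nonneg _)]
    rw [← enorm_eq_nnnorm, ← ofReal_norm, ENNReal.ofReal_rpow_of_nonneg (norm_nonneg _)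
      (by norm_num : (0:ℝ) ≤ 2)]
    congr 1
    rw [show (2:ℝ) = ((2:ℕ):ℝ) by norm_num, Real.rpow_natCast, habs]
  rw [physDelta, eLpNorm_eq_lintegral_rpow_enorm_toReal (by norm_num) (by norm_num)]
  have hlow : ENNReal.ofReal ((1 / (4 * ((m : ℝ) + 1))) ^ 2)
      ≤ ∫⁻ p, (‖D p‖₊ : ℝ≥0∞) ^ (2 : ℝ) ∂(P.prod P) := by
    calc ENNReal.ofReal ((1 / (4 * ((m : ℝ) + 1))) ^ 2)
        = ENNReal.ofReal (phi (2 * m + 2) ^ 2) * ((2⁻¹ : ℝ≥0∞) ^ (2 * m + 4)) := by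
          rw [numeric m, ofReal_half_pow, ← ENNReal.ofReal_mul (by positivity)]
      _ = ENNReal.ofReal (phi (2 * m + 2) ^ 2) * (P.prod P) E := by rw [hEmeasure]
      _ = ∫⁻ _ in E, ENNReal.ofReal (phi (2 * m + 2) ^ 2) ∂(P.prod P) :=
          (setLIntegral_const _ _).symm
      _ ≤ ∫⁻ p in E, (‖D p‖₊ : ℝ≥0∞) ^ (2 : ℝ) ∂(P.prod P) :=
          setLIntegral_mono' hEmeas fun p hp => le_of_eq (hpoint p hp)
      _ ≤ ∫⁻ p, (‖D p‖₊ : ℝ≥0∞) ^ (2 : ℝ) ∂(P.prod P) := setLIntegral_le_lintegral _ _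
  have htoReal : (2 : ℝ≥0∞).toReal = (2 : ℝ) := by simp
  rw [htoReal]
  calc ENNReal.ofReal (1 / (4 * ((m : ℝ) + 1)))
      = (ENNReal.ofReal ((1 / (4 * ((m : ℝ) + 1))) ^ 2)) ^ (1 / (2:ℝ)) := by
        rw [ENNReal.ofReal_rpow_of_nonneg (by positivity) (by norm_num)]
        congr 1
        rw [show ((1 / (4 * ((m : ℝ) + 1))) ^ 2 : ℝ)
            = (1 / (4 * ((m : ℝ) + 1))) ^ ((2:ℕ):ℝ) by rw [Real.rpow_natCast]]
        rw [← Real.rpow_mul (by positivity)]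
        norm_num
    _ ≤ (∫⁻ p, (‖D p‖₊ : ℝ≥0∞) ^ (2 : ℝ) ∂(P.prod P)) ^ (1 / (2:ℝ)) :=
        ENNReal.rpow_le_rpow hlow (by norm_num)

omit hP in
lemma harmonic_top : (∑' m : ℕ, ENNReal.ofReal (1 / (4 * ((m : ℝ) + 1)))) = ⊤ := by
  by_contra hne
  have hsum : Summable (fun m : ℕ => (1 / (4 * ((m : ℝ) + 1))).toNNReal) :=
    ENNReal.tsum_coe_ne_top_iff_summable.mp hne
  have hsum2 : Summable (fun m : ℕ => 1 / (4 * ((m : ℝ) + 1))) := by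
    have := NNReal.summable_coe.mpr hsum
    refine this.congr fun m => ?_
    rw [Real.coe_toNNReal _ (by positivity)]
  have hsum3 : Summable (fun m : ℕ => 1 / ((m : ℝ) + 1)) := by
    refine (hsum2.mul_left 4).congr fun m => ?_
    have h1 : (4 : ℝ) * ((m : ℝ) + 1) ≠ 0 := by positivity
    field_simp
  have hsum4 : Summable (fun m : ℕ => 1 / ((m + 1 : ℕ) : ℝ)) := by
    refine hsum3.congr fun m => ?_
    push_cast
    ring
  exact Real.not_summable_one_div_natCast ((summable_nat_add_iff 1).mp hsum4)

omit hP in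
theorem main {P : Measure (ℤ → ℝ)} (hP : IsRademacherMeasure P) :
    ∃ f : (ℤ → ℝ) → ℝ, MemLp f 2 P ∧ Measurable[radF 0] f ∧
      (P[f | radF (-1)] =ᵐ[P] 0) ∧
      (∑' i : ℤ, physDelta P i f) = ⊤ := by
  refine ⟨f, memL2_f hP, measurable_f_radF, condexp_f hP, ?_⟩
  have hinj : Function.Injective (fun m : ℕ => co (2 * m + 1)) := by
    intro a b hab
    have := co_injective hab
    omega
  have h1 : ∑' m : ℕ, physDelta P (co (2 * m + 1)) f ≤ ∑' i : ℤ, physDelta P i f :=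
    ENNReal.tsum_comp_le_tsum_of_injective hinj _
  have h2 : (⊤ : ℝ≥0∞) ≤ ∑' m : ℕ, physDelta P (co (2 * m + 1)) f := by
    rw [← harmonic_top]
    exact ENNReal.tsum_le_tsum fun m => delta_lower hP m
  exact top_unique (h2.trans h1)

end Meas

end

end S17

/-- (A martingale difference violating Wu's condition, `d = 1`.) For i.i.d.
Rademacher coordinates, there exists `f ∈ L²(P)` which is `F_0`-measurable and satisfies
`E(f | F_{−1}) = 0` a.s., but whose physical dependence measures satisfy `∑_{i∈ℤ} δ_i(f) = ∞`. -/
theorem statement17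
    (P : Measure (ℤ → ℝ)) (hP : IsRademacherMeasure P) :
    ∃ f : (ℤ → ℝ) → ℝ, MemLp f 2 P ∧ Measurable[radF 0] f ∧
      (P[f | radF (-1)] =ᵐ[P] 0) ∧
      (∑' i : ℤ, physDelta P i f) = ⊤ :=
  S17.main hP
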